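/- The concatenation of t atomic saturable designs w¹,…,wᵗ for saturated structures S¹,…,Sᵗ, such that the first letters w^i_1 are pairwise distinct, is a design for the concatenated saturated structure S = S¹⋯Sᵗ. -/

import Mathlib

open scoped Classical

/-- An RNA nucleotide. -/
inductive Base | A | U | C | G
deriving DecidableEq, Inhabited, Repr

/-- The Watson-Crick pairing relation (only G-C and A-U pairs allowed). -/
def wcPair : Base → Base → Prop
  | .G, .C => True | .C, .G => True
  | .A, .U => True | .U, .A => True
  | _, _ => False

/-- The Nussinov-Jacobson pairing relation (G-C, A-U and G-U pairs allowed). -/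
def njPair : Base → Base → Prop
  | .G, .C => True | .C, .G => True
  | .A, .U => True | .U, .A => True
  | .G, .U => True | .U, .G => True
  | _, _ => False

/-- An RNA (pseudoknot-free) secondary structure, 0-indexed positions. -/
structure SecStr where
  len : ℕ
  pairs : Finset (ℕ × ℕ)
  lt : ∀ p ∈ pairs, p.1 < p.2
  ub : ∀ p ∈ pairs, p.2 < len
  once : ∀ p ∈ pairs, ∀ q ∈ pairs, p ≠ q →
    p.1 ≠ q.1 ∧ p.1 ≠ q.2 ∧ p.2 ≠ q.1 ∧ p.2 ≠ q.2
  noncross : ∀ p ∈ pairs, ∀ q ∈ pairs,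
    ¬ (p.1 < q.1 ∧ q.1 < p.2 ∧ p.2 < q.2)

def SecStr.pairedAt (S : SecStr) (i : ℕ) : Prop := ∃ p ∈ S.pairs, p.1 = i ∨ p.2 = i
def SecStr.unpairedAt (S : SecStr) (i : ℕ) : Prop := i < S.len ∧ ¬ S.pairedAt i
def SecStr.saturated (S : SecStr) : Prop := ∀ i < S.len, S.pairedAt i

/-- A structure is compatible with a sequence `w` (w.r.t. pairing relation `R`)
if it has the right length and all base pairs are `R`-valid. -/
def compat {α : Type*} [Inhabited α] (R : α → α → Prop) (w : List α) (S : SecStr) : Prop :=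
  S.len = w.length ∧ ∀ p ∈ S.pairs, R (w.getD p.1 default) (w.getD p.2 default)

/-- Base-pair-sum free energy of a structure on a sequence. -/
noncomputable def energy {α : Type*} [Inhabited α] (E : α → α → ℝ) (w : List α)
    (S : SecStr) : ℝ :=
  ∑ p ∈ S.pairs, E (w.getD p.1 default) (w.getD p.2 default)

/-- `w` is a Δ-design for `S`: `S` is compatible with `w`, and every other
compatible structure has energy at least `energy E w S + Δ`. -/
def isDesign {α : Type*} [Inhabited α] (R : α → α → Prop) (E : α → α → ℝ) (Δ : ℝ)
    (w : List α) (S : SecStr) : Prop :=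
  compat R w S ∧ ∀ S' : SecStr, compat R w S' → S' ≠ S →
    energy E w S' ≥ energy E w S + Δ

/- Tree representation machinery. -/
def encloses (q p : ℕ × ℕ) : Prop := q.1 < p.1 ∧ p.2 < q.2
def SecStr.hasParent (S : SecStr) (p : ℕ × ℕ) : Prop := ∃ q ∈ S.pairs, encloses q p
def SecStr.isParentOf (S : SecStr) (q p : ℕ × ℕ) : Prop :=
  q ∈ S.pairs ∧ p ∈ S.pairs ∧ encloses q p ∧ ¬ ∃ m ∈ S.pairs, encloses q m ∧ encloses m p

/-- Degree of a paired node: number of paired children plus one for the parent (if any). -/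
noncomputable def SecStr.pairDeg (S : SecStr) (p : ℕ × ℕ) : ℕ :=
  (S.pairs.filter (fun c => S.isParentOf p c)).card + (if S.hasParent p then 1 else 0)
/-- Degree of the virtual root: number of top-level base pairs. -/
noncomputable def SecStr.rootDeg (S : SecStr) : ℕ :=
  (S.pairs.filter (fun p => ¬ S.hasParent p)).card
/-- All nodes of the tree representation (including the virtual root) have degree ≤ d. -/
def SecStr.degLE (S : SecStr) (d : ℕ) : Prop :=
  S.rootDeg ≤ d ∧ ∀ p ∈ S.pairs, S.pairDeg p ≤ d

/-- A sequence is saturable if a saturated structure is compatible with it. -/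
def saturable {α : Type*} [Inhabited α] (R : α → α → Prop) (w : List α) : Prop :=
  ∃ S : SecStr, compat R w S ∧ S.saturated
/-- Atomic saturable: saturable, and no (nonempty) proper prefix is saturable. -/
def atomicSaturable {α : Type*} [Inhabited α] (R : α → α → Prop) (w : List α) : Prop :=
  saturable R w ∧ ∀ k, 0 < k → k < w.length → ¬ saturable R (w.take k)

/- Motifs. -/
def SecStr.unpChildOfPair (S : SecStr) (q : ℕ × ℕ) (u : ℕ) : Prop :=
  S.unpairedAt u ∧ q.1 < u ∧ u < q.2 ∧
    ¬ ∃ m ∈ S.pairs, q.1 < m.1 ∧ m.1 < u ∧ u < m.2 ∧ m.2 < q.2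
def SecStr.unpChildOfRoot (S : SecStr) (u : ℕ) : Prop :=
  S.unpairedAt u ∧ ¬ ∃ m ∈ S.pairs, m.1 < u ∧ u < m.2
/-- Motif m₅ : a tree node (possibly the root) of degree greater than four. -/
def hasM5 (S : SecStr) : Prop := 4 < S.rootDeg ∨ ∃ p ∈ S.pairs, 4 < S.pairDeg p
/-- Motif m₃∘ : a node with an unpaired child and degree greater than two. -/
def hasM3o (S : SecStr) : Prop :=
  (∃ q ∈ S.pairs, (∃ u, S.unpChildOfPair q u) ∧ 2 < S.pairDeg q) ∨
  ((∃ u, S.unpChildOfRoot u) ∧ 2 < S.rootDeg)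

/- Colorings of the tree representation. -/
inductive Col | black | white | gray
deriving DecidableEq

noncomputable def childCount (S : SecStr) (col : ℕ × ℕ → Col) (q : ℕ × ℕ) (c : Col) : ℕ :=
  (S.pairs.filter (fun p => S.isParentOf q p ∧ col p = c)).card
noncomputable def rootChildCount (S : SecStr) (col : ℕ × ℕ → Col) (c : Col) : ℕ :=
  (S.pairs.filter (fun p => ¬ S.hasParent p ∧ col p = c)).card

/-- A proper coloring of the tree representation. -/
def properCol (S : SecStr) (col : ℕ × ℕ → Col) : Prop :=
  rootChildCount S col .black ≤ 1 ∧ rootChildCount S col .white ≤ 1 ∧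
  rootChildCount S col .gray ≤ 2 ∧
  ∀ q ∈ S.pairs,
    childCount S col q .black ≤ 1 ∧ childCount S col q .white ≤ 1 ∧
    childCount S col q .gray ≤ 2 ∧
    childCount S col q (col q) ≤ 1 ∧
    (col q = .black → ∀ p ∈ S.pairs, S.isParentOf q p → col p ≠ .white) ∧
    (col q = .white → ∀ p ∈ S.pairs, S.isParentOf q p → col p ≠ .black)

/-- Level of a paired node: #black minus #white on the path to the root (incl. itself). -/
noncomputable def pairLvl (S : SecStr) (col : ℕ × ℕ → Col) (p : ℕ × ℕ) : ℤ :=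
  ((S.pairs.filter (fun q => q.1 ≤ p.1 ∧ p.2 ≤ q.2 ∧ col q = .black)).card : ℤ) -
  ((S.pairs.filter (fun q => q.1 ≤ p.1 ∧ p.2 ≤ q.2 ∧ col q = .white)).card : ℤ)
/-- Level of an unpaired node. -/
noncomputable def unpLvl (S : SecStr) (col : ℕ × ℕ → Col) (u : ℕ) : ℤ :=
  ((S.pairs.filter (fun q => q.1 < u ∧ u < q.2 ∧ col q = .black)).card : ℤ) -
  ((S.pairs.filter (fun q => q.1 < u ∧ u < q.2 ∧ col q = .white)).card : ℤ)

/-- Separated coloring: gray-node levels and unpaired-node levels are disjoint. -/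
def separatedCol (S : SecStr) (col : ℕ × ℕ → Col) : Prop :=
  ∀ p ∈ S.pairs, col p = .gray → ∀ u, S.unpairedAt u →
    pairLvl S col p ≠ unpLvl S col u

/-- A bipartite energy model: its compatibility graph is bipartite. -/
def Bipartite {α : Type*} (R : α → α → Prop) : Prop :=
  ∃ f : α → Bool, ∀ a b, R a b → f a ≠ f b

/-- The k-stutter of a sequence. -/
def stutterSeq {α : Type*} (w : List α) (k : ℕ) : List α :=
  w.flatMap (fun a => List.replicate k a)
/-- The base pairs of the k-stutter of a structure. -/
def stutterPairs (S : SecStr) (k : ℕ) : Finset (ℕ × ℕ) :=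
  S.pairs.biUnion (fun p => (Finset.range k).image
    (fun m => (k * p.1 + m, k * p.2 + (k - 1 - m))))

/-- Two base pairs belong to the same band (maximal stack) of S. -/
def sameBand (S : SecStr) (p p' : ℕ × ℕ) : Prop :=
  p ∈ S.pairs ∧ p' ∈ S.pairs ∧ p.1 + p.2 = p'.1 + p'.2 ∧
  ∀ x, min p.1 p'.1 ≤ x → x ≤ max p.1 p'.1 → (x, p.1 + p.2 - x) ∈ S.pairs

/-- Nussinov-Jacobson energies: a for G-C, b for A-U, g for G-U. -/
def njE (a b g : ℝ) : Base → Base → ℝ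
  | .G, .C => a | .C, .G => a
  | .A, .U => b | .U, .A => b
  | .G, .U => g | .U, .G => g
  | _, _ => 0

/-- level of position i : #G minus #C in the prefix of w ending at i. -/
def lvl (w : List Base) (i : ℕ) : ℤ :=
  ((w.take (i+1)).count Base.G : ℤ) - ((w.take (i+1)).count Base.C : ℤ)


/- ===================== Auxiliary development ===================== -/

section Aux

lemma SecStr.ext' {S T : SecStr} (hl : S.len = T.len) (hp : S.pairs = T.pairs) : S = T := by
  cases S; cases T; simp_all

/-- Watson-Crick complement. -/
def wcComp : Base → Base
  | .A => .U | .U => .A | .G => .C | .C => .G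

lemma wcPair_iff {x y : Base} : wcPair x y ↔ y = wcComp x := by
  cases x <;> cases y <;> simp [wcPair, wcComp]

lemma wcComp_inj : Function.Injective wcComp := by
  intro x y; cases x <;> cases y <;> simp [wcComp]

/-- Encoding of bases as letters of the free group on two generators. -/
def bcode : Base → Bool × Bool
  | .A => (false, true) | .U => (false, false) | .G => (true, true) | .C => (true, false)

lemma bcode_wc {x y : Base} (h : wcPair x y) : bcode y = ((bcode x).1, !(bcode x).2) := by
  cases x <;> cases y <;> simp [wcPair] at h <;> rfl

lemma wc_of_bcode {x y : Base} (h : bcode y = ((bcode x).1, !(bcode x).2)) : wcPair x y := by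
  cases x <;> cases y <;> simp_all [bcode, wcPair]

/-- Evaluation of a base sequence in the free group. -/
def beval (w : List Base) : FreeGroup Bool := FreeGroup.mk (w.map bcode)

lemma beval_append (u v : List Base) : beval (u ++ v) = beval u * beval v := by
  simp [beval, FreeGroup.mul_mk]

lemma beval_nil : beval [] = 1 := by simp [beval, FreeGroup.one_eq_mk]

lemma beval_pair {x y : Base} (h : wcPair x y) : beval [x, y] = 1 := by
  have hc := bcode_wc h
  show FreeGroup.mk [bcode x, bcode y] = 1
  rw [hc, FreeGroup.one_eq_mk]
  apply Quot.sound
  have := @FreeGroup.Red.Step.not Bool [] [] (bcode x).1 (bcode x).2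
  simpa using this

lemma red_to_nil {w : List Base} (h : beval w = 1) : FreeGroup.Red (w.map bcode) [] := by
  rw [beval, FreeGroup.one_eq_mk] at h
  rcases FreeGroup.Red.exact.mp h with ⟨c, h1, h2⟩
  rw [FreeGroup.Red.nil_iff] at h2; subst h2; exact h1

lemma step_decomp {α : Type*} {L M : List (α × Bool)} (h : FreeGroup.Red.Step L M) :
    ∃ L₁ L₂ x b, L = L₁ ++ (x, b) :: (x, !b) :: L₂ := by
  cases h with
  | @not L₁ L₂ x b => exact ⟨L₁, L₂, x, b, rfl⟩

lemma exists_adj {w : List Base} (h : beval w = 1) (hne : w ≠ []) :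
    ∃ u x y v, w = u ++ x :: y :: v ∧ wcPair x y := by
  have hr := red_to_nil h
  rcases Relation.ReflTransGen.cases_head hr with heq | ⟨M, hstep, -⟩
  · exact absurd (List.map_eq_nil_iff.mp heq) hne
  · obtain ⟨L₁, L₂, a, b, hL⟩ := step_decomp hstep
    rcases List.map_eq_append_iff.mp hL with ⟨u, rest, rfl, hu, hrest⟩
    rcases List.map_eq_cons_iff.mp hrest with ⟨x, rest2, rfl, hx, hrest2⟩
    rcases List.map_eq_cons_iff.mp hrest2 with ⟨y, v, rfl, hy, hv⟩
    refine ⟨u, x, y, v, rfl, wc_of_bcode ?_⟩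
    rw [hx, hy]


/-- Restrict a structure to a subset of its pairs. -/
noncomputable def restrictStr (S : SecStr) (Q : ℕ × ℕ → Prop) (n' : ℕ)
    (hub : ∀ p ∈ S.pairs, Q p → p.2 < n') : SecStr where
  len := n'
  pairs := S.pairs.filter fun p => Q p
  lt := fun p hp => S.lt p (Finset.mem_filter.mp hp).1
  ub := fun p hp => hub p (Finset.mem_filter.mp hp).1 (Finset.mem_filter.mp hp).2
  once := fun p hp q hq => S.once p (Finset.mem_filter.mp hp).1 q (Finset.mem_filter.mp hq).1
  noncross := fun p hp q hq => S.noncross p (Finset.mem_filter.mp hp).1 q (Finset.mem_filter.mp hq).1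

lemma mem_restrictStr_pairs {S : SecStr} {Q : ℕ × ℕ → Prop} {n' : ℕ} {hub} {p : ℕ × ℕ} :
    p ∈ (restrictStr S Q n' hub).pairs ↔ p ∈ S.pairs ∧ Q p := Finset.mem_filter

@[simp] lemma restrictStr_len (S : SecStr) (Q : ℕ × ℕ → Prop) (n' : ℕ) (hub) :
    (restrictStr S Q n' hub).len = n' := rfl

/-- Reindex the positions of a structure along a strictly monotone map. -/
noncomputable def reindexStr (S : SecStr) (f : ℕ → ℕ) (n' : ℕ) (D : ℕ → Prop)
    (hD : ∀ p ∈ S.pairs, D p.1 ∧ D p.2)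
    (hmono : ∀ x y, D x → D y → x < y → f x < f y)
    (hub : ∀ p ∈ S.pairs, f p.2 < n') : SecStr where
  len := n'
  pairs := S.pairs.image fun p => (f p.1, f p.2)
  lt := by
    intro p hp
    rcases Finset.mem_image.mp hp with ⟨q, hq, rfl⟩
    exact hmono _ _ (hD q hq).1 (hD q hq).2 (S.lt q hq)
  ub := by
    intro p hp; rcases Finset.mem_image.mp hp with ⟨q, hq, rfl⟩; exact hub q hq
  once := by
    intro p hp q hq hpq
    rcases Finset.mem_image.mp hp with ⟨a, ha, rfl⟩
    rcases Finset.mem_image.mp hq with ⟨b, hb, rfl⟩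
    have hab : a ≠ b := by rintro rfl; exact hpq rfl
    have h4 := S.once a ha b hb hab
    have inj : ∀ x y, D x → D y → f x = f y → x = y := by
      intro x y hx hy hxy
      rcases lt_trichotomy x y with h | h | h
      · exact absurd hxy (Nat.ne_of_lt (hmono _ _ hx hy h))
      · exact h
      · exact absurd hxy.symm (Nat.ne_of_lt (hmono _ _ hy hx h))
    obtain ⟨ha1, ha2⟩ := hD a ha; obtain ⟨hb1, hb2⟩ := hD b hb
    exact ⟨fun h => h4.1 (inj _ _ ha1 hb1 h), fun h => h4.2.1 (inj _ _ ha1 hb2 h),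
      fun h => h4.2.2.1 (inj _ _ ha2 hb1 h), fun h => h4.2.2.2 (inj _ _ ha2 hb2 h)⟩
  noncross := by
    intro p hp q hq
    rcases Finset.mem_image.mp hp with ⟨a, ha, rfl⟩
    rcases Finset.mem_image.mp hq with ⟨b, hb, rfl⟩
    obtain ⟨ha1, ha2⟩ := hD a ha; obtain ⟨hb1, hb2⟩ := hD b hb
    rintro ⟨h1, h2, h3⟩
    have r : ∀ x y, D x → D y → f x < f y → x < y := by
      intro x y hx hy hxy
      rcases lt_trichotomy x y with h | h | h
      · exact h
      · subst h; exact absurd hxy (lt_irrefl _)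
      · exact absurd (hmono _ _ hy hx h) (Nat.lt_asymm hxy)
    exact S.noncross a ha b hb ⟨r _ _ ha1 hb1 h1, r _ _ hb1 ha2 h2, r _ _ ha2 hb2 h3⟩

@[simp] lemma reindexStr_pairs (S : SecStr) (f : ℕ → ℕ) (n' : ℕ) (D : ℕ → Prop)
    (hD hmono hub) : (reindexStr S f n' D hD hmono hub).pairs
      = S.pairs.image (fun p => (f p.1, f p.2)) := rfl

@[simp] lemma reindexStr_len (S : SecStr) (f : ℕ → ℕ) (n' : ℕ) (D : ℕ → Prop)
    (hD hmono hub) : (reindexStr S f n' D hD hmono hub).len = n' := rfl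

/-- Insert an adjacent pair into a structure not touching it. -/
noncomputable def insertAdjStr (S : SecStr) (i : ℕ)
    (hni : ∀ p ∈ S.pairs, p.1 ≠ i ∧ p.1 ≠ i + 1 ∧ p.2 ≠ i ∧ p.2 ≠ i + 1)
    (hub2 : i + 1 < S.len) : SecStr where
  len := S.len
  pairs := insert (i, i + 1) S.pairs
  lt := by
    intro p hp; rcases Finset.mem_insert.mp hp with rfl | hp
    · exact Nat.lt_succ_self i
    · exact S.lt p hp
  ub := by
    intro p hp; rcases Finset.mem_insert.mp hp with rfl | hp
    · exact hub2
    · exact S.ub p hp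
  once := by
    intro p hp q hq hpq
    rcases Finset.mem_insert.mp hp with rfl | hp <;> rcases Finset.mem_insert.mp hq with rfl | hq
    · exact absurd rfl hpq
    · obtain ⟨h1, h2, h3, h4⟩ := hni q hq
      exact ⟨h1.symm, h3.symm, h2.symm, h4.symm⟩
    · obtain ⟨h1, h2, h3, h4⟩ := hni p hp
      exact ⟨h1, h2, h3, h4⟩
    · exact S.once p hp q hq hpq
  noncross := by
    intro p hp q hq
    rcases Finset.mem_insert.mp hp with rfl | hp <;> rcases Finset.mem_insert.mp hq with rfl | hq
    · omega
    · omega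
    · omega
    · exact S.noncross p hp q hq

@[simp] lemma insertAdjStr_pairs (S : SecStr) (i : ℕ) (hni hub2) :
    (insertAdjStr S i hni hub2).pairs = insert (i, i + 1) S.pairs := rfl

@[simp] lemma insertAdjStr_len (S : SecStr) (i : ℕ) (hni hub2) :
    (insertAdjStr S i hni hub2).len = S.len := rfl

/-- The set of positions covered by the pairs. -/
noncomputable def SecStr.cover (S : SecStr) : Finset ℕ :=
  S.pairs.biUnion fun p => {p.1, p.2}

lemma SecStr.card_cover (S : SecStr) : S.cover.card = 2 * S.pairs.card := by
  rw [SecStr.cover, Finset.card_biUnion]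
  · rw [Finset.sum_congr rfl (fun p hp => ?_), Finset.sum_const, smul_eq_mul, mul_comm]
    exact Finset.card_pair (Nat.ne_of_lt (S.lt p hp))
  · intro p hp q hq hpq
    have h4 := S.once p hp q hq hpq
    rw [Function.onFun, Finset.disjoint_left]
    intro a ha hb
    simp only [Finset.mem_insert, Finset.mem_singleton] at ha hb
    rcases ha with rfl | rfl <;> rcases hb with h | h <;> simp_all

lemma SecStr.cover_subset (S : SecStr) : S.cover ⊆ Finset.range S.len := by
  intro a ha
  rcases Finset.mem_biUnion.mp ha with ⟨p, hp, hap⟩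
  simp only [Finset.mem_insert, Finset.mem_singleton] at hap
  have h1 := S.lt p hp; have h2 := S.ub p hp
  rcases hap with rfl | rfl <;> simp [Finset.mem_range] <;> omega

lemma SecStr.two_mul_card_le (S : SecStr) : 2 * S.pairs.card ≤ S.len := by
  have := Finset.card_le_card S.cover_subset
  rwa [S.card_cover, Finset.card_range] at this

lemma SecStr.two_mul_card_of_saturated {S : SecStr} (h : S.saturated) :
    2 * S.pairs.card = S.len := by
  have hsub : Finset.range S.len ⊆ S.cover := by
    intro a ha
    rw [Finset.mem_range] at ha
    obtain ⟨p, hp, hap⟩ := h a ha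
    apply Finset.mem_biUnion.mpr ⟨p, hp, ?_⟩
    simp only [Finset.mem_insert, Finset.mem_singleton]
    omega
  have := Finset.card_le_card hsub
  rw [Finset.card_range, S.card_cover] at this
  exact le_antisymm S.two_mul_card_le this

lemma SecStr.saturated_of_card {S : SecStr} (h : S.len ≤ 2 * S.pairs.card) : S.saturated := by
  have hsub : S.cover = Finset.range S.len := by
    apply Finset.eq_of_subset_of_card_le S.cover_subset
    rw [Finset.card_range, S.card_cover]; exact h
  intro a ha
  have : a ∈ S.cover := by rw [hsub, Finset.mem_range]; exact ha
  rcases Finset.mem_biUnion.mp this with ⟨p, hp, hap⟩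
  simp only [Finset.mem_insert, Finset.mem_singleton] at hap
  exact ⟨p, hp, by omega⟩

lemma energy_const (w : List Base) (S : SecStr) :
    energy (fun _ _ => (-1 : ℝ)) w S = -(S.pairs.card : ℝ) := by
  simp [energy]

/- getD helper lemmas -/
lemma getD_take' {α : Type*} [Inhabited α] (w : List α) {m k : ℕ} (h : k < m) :
    (w.take m).getD k default = w.getD k default := by
  by_cases hk : k < w.length
  · conv_rhs => rw [← List.take_append_drop m w]
    rw [List.getD_append]
    rw [List.length_take]; omega
  · rw [List.getD_eq_default, List.getD_eq_default] <;>
      [omega; skip] <;> rw [List.length_take] <;> omega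


/-- A nonempty saturated structure contains an adjacent pair. -/
lemma exists_adj_pair {S : SecStr} (hS : S.saturated) (hne : S.pairs.Nonempty) :
    ∃ i, (i, i + 1) ∈ S.pairs := by
  obtain ⟨p, hp, hmin⟩ := S.pairs.exists_min_image (fun p => p.2 - p.1) hne
  rcases Nat.lt_or_ge (p.1 + 1) p.2 with h | h
  · exfalso
    have hp1 : p.1 + 1 < S.len := lt_trans h (S.ub p hp)
    obtain ⟨q, hq, hq'⟩ := hS (p.1 + 1) hp1
    have hlp := S.lt p hp
    have hlq := S.lt q hq
    have hqp : q ≠ p := by rintro rfl; omega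
    have h4 := S.once q hq p hp hqp
    have hmin' := hmin q hq
    have nc1 := S.noncross p hp q hq
    have nc2 := S.noncross q hq p hp
    omega
  · have hlt := S.lt p hp
    have : p = (p.1, p.1 + 1) := by
      rcases p with ⟨a, b⟩
      simp only [Prod.mk.injEq, true_and]
      omega
    exact ⟨p.1, by rwa [← this]⟩

/-- Saturated ⇒ the word is trivial in the free group. -/
lemma beval_eq_one_of_sat : ∀ n (w : List Base) (S : SecStr), w.length = n →
    compat wcPair w S → S.saturated → beval w = 1 := by
  intro n
  induction n using Nat.strong_induction_on with
  | _ n ih =>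
    intro w S hn hc hS
    rcases eq_or_ne w [] with rfl | hwne
    · exact beval_nil
    have hl0 : 0 < S.len := by rw [hc.1]; exact List.length_pos_iff.mpr hwne
    have hpne : S.pairs.Nonempty := by
      obtain ⟨p, hp, -⟩ := hS 0 hl0
      exact ⟨p, hp⟩
    obtain ⟨i, hi⟩ := exists_adj_pair hS hpne
    have hilt : i + 1 < w.length := by rw [← hc.1]; exact S.ub _ hi
    have hwc : wcPair (w.getD i default) (w.getD (i + 1) default) := hc.2 _ hi
    -- decompose w
    have hidx : i < w.length := by omega
    have hdecomp : w = w.take i ++ w.getD i default :: w.getD (i + 1) default :: w.drop (i + 2) := by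
      conv_lhs => rw [← List.take_append_drop i w]
      congr 1
      rw [List.drop_eq_getElem_cons hidx, List.drop_eq_getElem_cons hilt]
      rw [List.getD_eq_getElem w default hidx, List.getD_eq_getElem w default hilt]
    -- the reduced structure
    set w' := w.take i ++ w.drop (i + 2) with hw'
    have hw'len : w'.length = w.length - 2 := by
      rw [hw', List.length_append, List.length_take, List.length_drop]; omega
    have hni : ∀ p ∈ S.pairs, p ≠ (i, i + 1) → p.1 ≠ i ∧ p.1 ≠ i + 1 ∧ p.2 ≠ i ∧ p.2 ≠ i + 1 := by
      intro p hp hne'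
      have h4 := S.once p hp _ hi hne'
      exact ⟨h4.1, h4.2.1, h4.2.2.1, h4.2.2.2⟩
    have hgetd : ∀ k, k ≠ i → k ≠ i + 1 →
        w'.getD (if k < i then k else k - 2) default = w.getD k default := by
      intro k hk1 hk2
      by_cases hk : k < i
      · rw [if_pos hk, hw', List.getD_append]
        · exact getD_take' w hk
        · rw [List.length_take]; omega
      · rw [if_neg hk, hw', List.getD_append_right]
        swap
        · rw [List.length_take]; omega
        rw [List.length_take]
        by_cases hkl : k < w.length
        · have h1 : k - 2 - min i w.length = k - 2 - i := by omega
          rw [h1]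
          rw [List.getD_eq_getElem?_getD, List.getD_eq_getElem?_getD, List.getElem?_drop]
          congr 2
          omega
        · rw [List.getD_eq_default, List.getD_eq_default]
          · omega
          · rw [List.length_drop]; omega
    set T := reindexStr
      (restrictStr S (fun p => p ≠ (i, i + 1)) S.len (fun p hp _ => S.ub p hp))
      (fun x => if x < i then x else x - 2) (w.length - 2)
      (fun x => x ≠ i ∧ x ≠ i + 1)
      (by
        intro p hp
        rw [mem_restrictStr_pairs] at hp
        have := hni p hp.1 hp.2
        exact ⟨⟨this.1, this.2.1⟩, ⟨this.2.2.1, this.2.2.2⟩⟩)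
      (by intro x y hx hy hxy; split_ifs <;> omega)
      (by
        intro p hp
        rw [mem_restrictStr_pairs] at hp
        have h1 := S.ub p hp.1
        have h2 := (hni p hp.1 hp.2).2.2
        rw [hc.1] at h1
        split_ifs <;> omega) with hT
    have hcT : compat wcPair w' T := by
      constructor
      · rw [hT, reindexStr_len, hw'len]
      · intro p hp
        rw [hT, reindexStr_pairs] at hp
        rcases Finset.mem_image.mp hp with ⟨q, hq, rfl⟩
        rw [mem_restrictStr_pairs] at hq
        have h4 := hni q hq.1 hq.2
        rw [hgetd _ h4.1 h4.2.1, hgetd _ h4.2.2.1 h4.2.2.2]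
        exact hc.2 q hq.1
    have hsT : T.saturated := by
      intro y hy
      rw [hT, reindexStr_len] at hy
      have hxl : (if y < i then y else y + 2) < S.len := by
        rw [hc.1]; split_ifs <;> omega
      obtain ⟨q, hq, hqx⟩ := hS (if y < i then y else y + 2) hxl
      have hqne : q ≠ (i, i + 1) := by
        rintro rfl
        simp only at hqx
        split_ifs at hqx <;> omega
      refine ⟨(if q.1 < i then q.1 else q.1 - 2, if q.2 < i then q.2 else q.2 - 2), ?_, ?_⟩
      · rw [hT, reindexStr_pairs]
        exact Finset.mem_image.mpr ⟨q, mem_restrictStr_pairs.mpr ⟨hq, hqne⟩, rfl⟩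
      · have h4 := hni q hq hqne
        have hql := S.lt q hq
        rcases hqx with h | h
        · left; split_ifs at h ⊢ <;> omega
        · right; split_ifs at h ⊢ <;> omega
    have hT1 : beval w' = 1 := by
      apply ih (w.length - 2) (by omega) w' T (by omega) hcT hsT
    calc beval w = beval (w.take i ++ [w.getD i default, w.getD (i+1) default]
          ++ w.drop (i + 2)) := by
            conv_lhs => rw [hdecomp]
            simp
      _ = beval (w.take i) * beval [w.getD i default, w.getD (i+1) default]
          * beval (w.drop (i + 2)) := by rw [beval_append, beval_append]
      _ = beval (w.take i) * beval (w.drop (i + 2)) := by rw [beval_pair hwc, mul_one]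
      _ = beval w' := (beval_append _ _).symm
      _ = 1 := hT1

/-- Trivial in the free group ⇒ saturable. -/
lemma saturable_of_beval : ∀ n (w : List Base), w.length = n → beval w = 1 →
    saturable wcPair w := by
  intro n
  induction n using Nat.strong_induction_on with
  | _ n ih =>
    intro w hn hev
    rcases eq_or_ne w [] with rfl | hwne
    · exact ⟨⟨0, ∅, by simp, by simp, by simp, by simp⟩,
        ⟨by simp [compat], by simp⟩, fun i hi => absurd hi (by simp)⟩
    obtain ⟨u, x, y, v, rfl, hwc⟩ := exists_adj hev hwne
    set i := u.length with hidef
    have hev' : beval (u ++ v) = 1 := by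
      have h1 : beval (u ++ x :: y :: v) = beval u * beval [x, y] * beval v := by
        rw [show u ++ x :: y :: v = u ++ [x, y] ++ v by simp, beval_append, beval_append]
      rw [h1, beval_pair hwc, mul_one, ← beval_append] at hev
      exact hev
    have hlen : (u ++ v).length < n := by
      rw [← hn]; simp
    obtain ⟨S', hc', hS'⟩ := ih _ hlen (u ++ v) rfl hev'
    have hlen' : S'.len = u.length + v.length := by rw [hc'.1, List.length_append]
    have hwlen : (u ++ x :: y :: v).length = u.length + v.length + 2 := by simp; omega
    set T0 := reindexStr S' (fun z => if z < i then z else z + 2)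
      (u ++ x :: y :: v).length (fun _ => True)
      (fun p _ => ⟨trivial, trivial⟩)
      (by intro a b _ _ hab; split_ifs <;> omega)
      (by
        intro p hp
        have := S'.ub p hp
        rw [hlen'] at this
        rw [hwlen]
        split_ifs <;> omega) with hT0
    set T := insertAdjStr T0 i
      (by
        intro p hp
        rw [hT0, reindexStr_pairs] at hp
        rcases Finset.mem_image.mp hp with ⟨q, hq, rfl⟩
        constructor
        · split_ifs <;> omega
        constructor
        · split_ifs <;> omega
        constructor
        · split_ifs <;> omega
        · split_ifs <;> omega)
      (by rw [hT0, reindexStr_len, hwlen]; omega) with hTdef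
    refine ⟨T, ⟨?_, ?_⟩, ?_⟩
    · rw [hTdef, insertAdjStr_len, hT0, reindexStr_len]
    · intro p hp
      rw [hTdef, insertAdjStr_pairs, Finset.mem_insert] at hp
      rcases hp with rfl | hp
      · have hgi : (u ++ x :: y :: v).getD i default = x := by
          rw [List.getD_append_right _ _ _ _ (le_refl _), Nat.sub_self]; rfl
        have hgi1 : (u ++ x :: y :: v).getD (i + 1) default = y := by
          rw [List.getD_append_right _ _ _ _ (by omega)]
          have : i + 1 - u.length = 1 := by omega
          rw [this]; rfl
        show wcPair ((u ++ x :: y :: v).getD i default) ((u ++ x :: y :: v).getD (i + 1) default)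
        rw [hgi, hgi1]; exact hwc
      · rw [hT0, reindexStr_pairs] at hp
        rcases Finset.mem_image.mp hp with ⟨q, hq, rfl⟩
        have hub1 := S'.ub q hq
        have hlt1 := S'.lt q hq
        rw [hlen'] at hub1
        have hget : ∀ k, k < u.length + v.length →
            (u ++ x :: y :: v).getD (if k < i then k else k + 2) default
              = (u ++ v).getD k default := by
          intro k hk
          by_cases hki : k < i
          · rw [if_pos hki, List.getD_append _ _ _ _ (by omega),
              List.getD_append _ _ _ _ (by omega)]
          · rw [if_neg hki, List.getD_append_right _ _ _ _ (by omega),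
              List.getD_append_right _ _ _ _ (by omega)]
            have : k + 2 - u.length = (k - u.length) + 2 := by omega
            rw [this]
            rfl
        rw [hget _ (by omega), hget _ (by omega)]
        exact hc'.2 q hq
    · intro k hk
      rw [hTdef, insertAdjStr_len, hT0, reindexStr_len, hwlen] at hk
      by_cases hki : k = i
      · exact ⟨(i, i + 1), by rw [hTdef, insertAdjStr_pairs]; exact Finset.mem_insert_self _ _,
          by omega⟩
      by_cases hki1 : k = i + 1
      · exact ⟨(i, i + 1), by rw [hTdef, insertAdjStr_pairs]; exact Finset.mem_insert_self _ _,
          by omega⟩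
      have hzl : (if k < i then k else k - 2) < S'.len := by
        rw [hlen']; split_ifs <;> omega
      obtain ⟨q, hq, hqz⟩ := hS' (if k < i then k else k - 2) hzl
      refine ⟨(if q.1 < i then q.1 else q.1 + 2, if q.2 < i then q.2 else q.2 + 2), ?_, ?_⟩
      · rw [hTdef, insertAdjStr_pairs]
        apply Finset.mem_insert_of_mem
        rw [hT0, reindexStr_pairs]
        exact Finset.mem_image.mpr ⟨q, hq, rfl⟩
      · have hql := S'.lt q hq
        rcases hqz with h | h
        · left; split_ifs at h ⊢ <;> omega
        · right; split_ifs at h ⊢ <;> omega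

lemma saturable_iff_beval {w : List Base} : saturable wcPair w ↔ beval w = 1 := by
  constructor
  · rintro ⟨S, hc, hS⟩
    exact beval_eq_one_of_sat w.length w S rfl hc hS
  · intro h
    exact saturable_of_beval w.length w rfl h


/-- Pairs other than the pair at 0 are inside it or after it. -/
lemma inside_or_after {S : SecStr} {j : ℕ} (hj : (0, j) ∈ S.pairs) :
    ∀ q ∈ S.pairs, q ≠ (0, j) → (0 < q.1 ∧ q.2 < j) ∨ j < q.1 := by
  intro q hq hne
  have h4 := S.once q hq _ hj hne
  have hlq := S.lt q hq
  have nc := S.noncross (0, j) hj q hq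
  simp only at nc h4
  omega

/-- The prefix closed by the pair at 0 in a saturated structure is saturable. -/
lemma beval_take_of_pair {w : List Base} {S : SecStr} (hc : compat wcPair w S)
    (hS : S.saturated) {j : ℕ} (hj : (0, j) ∈ S.pairs) :
    beval (w.take (j + 1)) = 1 := by
  have hjl : j < S.len := S.ub _ hj
  have hjw : j < w.length := by rw [← hc.1]; exact hjl
  set T := restrictStr S (fun p => p.2 ≤ j) (j + 1) (fun p _ h => by omega) with hT
  have hcT : compat wcPair (w.take (j + 1)) T := by
    constructor
    · rw [hT, restrictStr_len, List.length_take]; omega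
    · intro p hp
      rw [hT, mem_restrictStr_pairs] at hp
      have hlt := S.lt p hp.1
      rw [getD_take' w (by omega), getD_take' w (by omega)]
      exact hc.2 p hp.1
  have hsT : T.saturated := by
    intro k hk
    rw [hT, restrictStr_len] at hk
    by_cases hk0 : k = 0
    · exact ⟨(0, j), by rw [hT, mem_restrictStr_pairs]; exact ⟨hj, le_refl j⟩, by omega⟩
    by_cases hkj : k = j
    · exact ⟨(0, j), by rw [hT, mem_restrictStr_pairs]; exact ⟨hj, le_refl j⟩, by omega⟩
    obtain ⟨q, hq, hqk⟩ := hS k (by omega)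
    have hqne : q ≠ (0, j) := by
      rintro rfl; simp only at hqk; omega
    have hio := inside_or_after hj q hq hqne
    have hlq := S.lt q hq
    refine ⟨q, ?_, hqk⟩
    rw [hT, mem_restrictStr_pairs]
    exact ⟨hq, by omega⟩
  exact beval_eq_one_of_sat _ _ T rfl hcT hsT

lemma getD_zero' {α : Type*} [Inhabited α] {l : List α} (h : l ≠ []) :
    l.getD 0 default = l.headI := by
  cases l with
  | nil => exact absurd rfl h
  | cons a l => rfl

/-- The last letter of an atomic saturable word is the complement of its first. -/
lemma last_eq_comp_head {u : List Base} (ha : atomicSaturable wcPair u) (hu : u ≠ []) :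
    u.getD (u.length - 1) default = wcComp u.headI := by
  obtain ⟨⟨S, hc, hS⟩, hmin⟩ := ha
  have hl : 0 < S.len := by rw [hc.1]; exact List.length_pos_iff.mpr hu
  obtain ⟨p, hp, hp0⟩ := hS 0 hl
  rcases p with ⟨a, j⟩
  have hlt := S.lt _ hp
  have ha0 : a = 0 := by simp only at hp0 hlt; omega
  subst ha0
  have h1 := beval_take_of_pair hc hS hp
  have hjlt : j < u.length := by rw [← hc.1]; exact S.ub _ hp
  have hnlt : ¬ (j + 1 < u.length) := by
    intro h
    exact hmin (j + 1) (by omega) h (saturable_iff_beval.mpr h1)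
  have hj : j = u.length - 1 := by omega
  have hwc := hc.2 (0, j) hp
  rw [wcPair_iff] at hwc
  rw [← hj, hwc, getD_zero' hu]

/-- Saturable prefixes of a concatenation of atomic saturable words end at block
boundaries. -/
lemma block_end : ∀ (l : List (List Base)),
    (∀ u ∈ l, atomicSaturable wcPair u) → (∀ u ∈ l, u ≠ []) →
    ∀ m, 0 < m → m ≤ l.flatten.length → beval (l.flatten.take m) = 1 →
    ∃ l₁ v l₂, l = l₁ ++ v :: l₂ ∧ m = l₁.flatten.length + v.length := by
  intro l
  induction l with
  | nil =>
    intro _ _ m h1 h2 _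
    simp only [List.flatten_nil, List.length_nil] at h2
    omega
  | cons u rest ih =>
    intro hat hne m hm hmle hev
    have hau := hat u List.mem_cons_self
    have hfl : (u :: rest).flatten = u ++ rest.flatten := by simp
    rcases le_or_gt m u.length with h | h
    · have htk : (u :: rest).flatten.take m = u.take m := by
        rw [hfl, List.take_append_of_le_length h]
      rw [htk] at hev
      rcases Nat.lt_or_ge m u.length with h2 | h2
      · exact absurd (saturable_iff_beval.mpr hev) (hau.2 m hm h2)
      · refine ⟨[], u, rest, rfl, by simp; omega⟩
    · have htk : (u :: rest).flatten.take m = u ++ rest.flatten.take (m - u.length) := by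
        rw [hfl, ← List.take_length_add_append (m - u.length)]
        congr 1
        omega
      rw [htk, beval_append] at hev
      have hev1 : beval u = 1 := saturable_iff_beval.mp hau.1
      rw [hev1, one_mul] at hev
      have hmle' : m - u.length ≤ rest.flatten.length := by
        rw [hfl, List.length_append] at hmle; omega
      obtain ⟨l₁, v, l₂, hsplit, hm'⟩ := ih (fun x hx => hat x (List.mem_cons_of_mem _ hx))
        (fun x hx => hne x (List.mem_cons_of_mem _ hx)) (m - u.length) (by omega) hmle' hev
      refine ⟨u :: l₁, v, l₂, by rw [hsplit]; rfl, ?_⟩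
      simp only [List.flatten_cons, List.length_append]
      omega


/-- Key lemma: in a saturated structure on a concatenation of atomic saturable words
with pairwise distinct first letters, every base pair stays within one block. -/
lemma pairs_in_block : ∀ (l : List (List Base)),
    (∀ u ∈ l, atomicSaturable wcPair u) → (∀ u ∈ l, u ≠ []) →
    l.Pairwise (fun a b => a.headI ≠ b.headI) →
    ∀ S : SecStr, compat wcPair l.flatten S → S.saturated →
    ∀ p ∈ S.pairs, ∃ l₁ v l₂, l = l₁ ++ v :: l₂ ∧
      l₁.flatten.length ≤ p.1 ∧ p.2 < l₁.flatten.length + v.length := by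
  intro l
  induction l with
  | nil =>
    intro _ _ _ S hc hS p hp
    exfalso
    have := S.ub p hp
    rw [hc.1] at this
    simp at this
  | cons u rest ih =>
    intro hat hne hpw S hc hS p hp
    have hfl : (u :: rest).flatten = u ++ rest.flatten := by simp
    have hune : u ≠ [] := hne u List.mem_cons_self
    have hul : 0 < u.length := List.length_pos_iff.mpr hune
    have hlen : S.len = (u :: rest).flatten.length := hc.1
    have hWlen : (u :: rest).flatten.length = u.length + rest.flatten.length := by
      rw [hfl, List.length_append]
    have hl0 : 0 < S.len := by omega
    obtain ⟨p₀, hp₀, h00⟩ := hS 0 hl0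
    rcases p₀ with ⟨a, j⟩
    have hlt0 := S.lt _ hp₀
    have ha0 : a = 0 := by simp only at h00 hlt0; omega
    subst ha0
    have hjlen : j < (u :: rest).flatten.length := by rw [← hlen]; exact S.ub _ hp₀
    have hev := beval_take_of_pair hc hS hp₀
    obtain ⟨l₁, v, l₂, hsplit, hm⟩ := block_end (u :: rest) hat hne (j + 1)
      (by omega) (by omega) hev
    -- show the first block closes at position u.length - 1
    have hju : j + 1 = u.length := by
      rcases l₁ with _ | ⟨u', l₁'⟩
      · have : v = u := by
          have := hsplit
          simp only [List.nil_append, List.cons.injEq] at this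
          exact this.1.symm
        subst this
        simpa using hm
      · exfalso
        have hsp : u' = u ∧ rest = l₁' ++ v :: l₂ := by
          have := hsplit
          simp only [List.cons_append, List.cons.injEq] at this
          exact ⟨this.1.symm, this.2⟩
        have hvmem : v ∈ rest := by rw [hsp.2]; simp
        have hhead : u.headI ≠ v.headI := (List.pairwise_cons.mp hpw).1 v hvmem
        have hvne : v ≠ [] := hne v (List.mem_cons_of_mem _ hvmem)
        have hvl : 0 < v.length := List.length_pos_iff.mpr hvne
        have hl₁ne : l₁'.length + 1 = (u' :: l₁').length := rfl
        -- W.getD j = v.getD (v.length - 1)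
        have hWdecomp : (u :: rest).flatten = (u' :: l₁').flatten ++ (v ++ l₂.flatten) := by
          rw [hsplit]; simp
        have hWj : (u :: rest).flatten.getD j default = v.getD (v.length - 1) default := by
          rw [hWdecomp, List.getD_append_right _ _ _ _ (by omega),
            List.getD_append _ _ _ _ (by omega)]
          congr 1
          omega
        have hlast := last_eq_comp_head (hat v (List.mem_cons_of_mem _ hvmem)) hvne
        have hwc := hc.2 (0, j) hp₀
        rw [wcPair_iff] at hwc
        have hW0 : (u :: rest).flatten.getD 0 default = u.headI := by
          rw [hfl, List.getD_append _ _ _ _ (by omega), getD_zero' hune]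
        apply hhead
        apply wcComp_inj
        rw [← hlast, ← hWj, hwc, hW0]
    -- now p is inside block 0 or strictly after it
    by_cases hpj : p = (0, j)
    · exact ⟨[], u, rest, rfl, by simp [hpj], by simp [hpj]; omega⟩
    rcases inside_or_after hp₀ p hp hpj with ⟨h1, h2⟩ | h1
    · exact ⟨[], u, rest, rfl, by simp, by simp; omega⟩
    · -- after: recurse on the suffix structure
      have hp1u : u.length ≤ p.1 := by omega
      have hlt := S.lt p hp
      set T := reindexStr
        (restrictStr S (fun q => u.length ≤ q.1) S.len (fun q hq _ => S.ub q hq))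
        (fun x => x - u.length) rest.flatten.length (fun x => u.length ≤ x)
        (by
          intro q hq
          rw [mem_restrictStr_pairs] at hq
          have := S.lt q hq.1
          exact ⟨hq.2, by omega⟩)
        (by intro x y hx hy hxy; omega)
        (by
          intro q hq
          rw [mem_restrictStr_pairs] at hq
          have h1 := S.ub q hq.1
          have h2 := S.lt q hq.1
          omega) with hT
      have hcT : compat wcPair rest.flatten T := by
        constructor
        · rw [hT, reindexStr_len]
        · intro q hq
          rw [hT, reindexStr_pairs] at hq
          rcases Finset.mem_image.mp hq with ⟨r, hr, rfl⟩
          rw [mem_restrictStr_pairs] at hr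
          have hr2 := S.lt r hr.1
          have hg : ∀ k, u.length ≤ k →
              rest.flatten.getD (k - u.length) default = (u :: rest).flatten.getD k default := by
            intro k hk
            rw [hfl, List.getD_append_right _ _ _ _ hk]
          rw [hg _ hr.2, hg _ (by omega)]
          exact hc.2 r hr.1
      have hsT : T.saturated := by
        intro y hy
        rw [hT, reindexStr_len] at hy
        have hxl : y + u.length < S.len := by omega
        obtain ⟨q, hq, hqx⟩ := hS (y + u.length) hxl
        have hqne : q ≠ (0, j) := by
          rintro rfl
          simp only at hqx
          omega
        have hio := inside_or_after hp₀ q hq hqne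
        have hlq := S.lt q hq
        have hqin : u.length ≤ q.1 := by omega
        refine ⟨(q.1 - u.length, q.2 - u.length), ?_, ?_⟩
        · rw [hT, reindexStr_pairs]
          exact Finset.mem_image.mpr ⟨q, mem_restrictStr_pairs.mpr ⟨hq, hqin⟩, rfl⟩
        · simp only
          omega
      have hmemT : (p.1 - u.length, p.2 - u.length) ∈ T.pairs := by
        rw [hT, reindexStr_pairs]
        exact Finset.mem_image.mpr ⟨p, mem_restrictStr_pairs.mpr ⟨hp, hp1u⟩, rfl⟩
      obtain ⟨l₁', v', l₂', hs', h1', h2'⟩ := ih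
        (fun x hx => hat x (List.mem_cons_of_mem _ hx))
        (fun x hx => hne x (List.mem_cons_of_mem _ hx))
        (List.pairwise_cons.mp hpw).2 T hcT hsT _ hmemT
      simp only at h1' h2'
      refine ⟨u :: l₁', v', l₂', by rw [hs']; rfl, ?_, ?_⟩
      · simp only [List.flatten_cons, List.length_append]
        omega
      · simp only [List.flatten_cons, List.length_append]
        omega


/-- Every position of a flattened list lies in exactly one block. -/
lemma pos_block {α : Type*} : ∀ (l : List (List α)) (x : ℕ), x < l.flatten.length →
    ∃ k, k < l.length ∧ (l.take k).flatten.length ≤ x ∧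
      x < (l.take (k + 1)).flatten.length := by
  intro l
  induction l with
  | nil => intro x hx; simp at hx
  | cons u rest ih =>
    intro x hx
    rcases Nat.lt_or_ge x u.length with h | h
    · exact ⟨0, by simp, by simp, by simp; omega⟩
    · have hx' : x - u.length < rest.flatten.length := by
        simp only [List.flatten_cons, List.length_append] at hx; omega
      obtain ⟨k, hk, h1, h2⟩ := ih (x - u.length) hx'
      refine ⟨k + 1, by simp; omega, ?_, ?_⟩
      · simp only [List.take_succ_cons, List.flatten_cons, List.length_append]; omega
      · simp only [List.take_succ_cons, List.flatten_cons, List.length_append]; omega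

end Aux






/-- the concatenation of t atomic saturable designs with pairwise
distinct first letters is a design for the concatenated saturated structure. -/
theorem stmt6 (t : ℕ) (ws : Fin t → List Base) (Ss : Fin t → SecStr)
    (hdes : ∀ i, isDesign wcPair (fun _ _ => (-1 : ℝ)) 1 (ws i) (Ss i))
    (hatom : ∀ i, atomicSaturable wcPair (ws i))
    (hsat : ∀ i, (Ss i).saturated)
    (hne : ∀ i, ws i ≠ [])
    (hdist : ∀ i j, i ≠ j → (ws i).headI ≠ (ws j).headI)
    (W : List Base) (hW : W = (List.ofFn ws).flatten)
    (off : Fin t → ℕ)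
    (hoff : ∀ i, off i = ∑ j ∈ Finset.univ.filter (· < i), (ws j).length)
    (SW : SecStr) (hlen : SW.len = W.length)
    (hpairs : SW.pairs = Finset.univ.biUnion
      (fun i => (Ss i).pairs.image (fun p => (p.1 + off i, p.2 + off i)))) :
    isDesign wcPair (fun _ _ => (-1 : ℝ)) 1 W SW := by
  classical
  subst hW
  set l : List (List Base) := List.ofFn ws with hldef
  have hlenl : l.length = t := by rw [hldef, List.length_ofFn]
  have hgetl : ∀ (i : Fin t) (h : i.val < l.length), l[i.val] = ws i := by
    intro i h
    rw [List.getElem_eq_iff, hldef]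
    simp
  have hSSlen : ∀ i : Fin t, (Ss i).len = (ws i).length := fun i => ((hdes i).1).1
  have hdecomp : ∀ i : Fin t,
      l.flatten = (l.take i.val).flatten ++ (ws i ++ (l.drop (i.val + 1)).flatten) := by
    intro i
    conv_lhs => rw [← List.take_append_drop i.val l]
    rw [List.flatten_append]
    congr 1
    rw [List.drop_eq_getElem_cons (by rw [hlenl]; exact i.isLt), List.flatten_cons,
      hgetl i (by rw [hlenl]; exact i.isLt)]
  have hoffl : ∀ i : Fin t, off i = ((l.take i.val).flatten).length := by
    intro i
    rw [hoff i, List.length_flatten, List.map_take, hldef, List.map_ofFn,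
      List.sum_take_ofFn]
    refine Finset.sum_congr ?_ (fun x _ => rfl)
    ext x
    simp only [Finset.mem_filter, Finset.mem_univ, true_and, Fin.lt_def]
  have hstep : ∀ i : Fin t,
      (l.take (i.val + 1)).flatten.length
        = (l.take i.val).flatten.length + (ws i).length := by
    intro i
    rw [List.take_succ, List.getElem?_eq_getElem (by rw [hlenl]; exact i.isLt),
      hgetl i (by rw [hlenl]; exact i.isLt)]
    simp
  have hmono' : ∀ a b : ℕ, a ≤ b →
      (l.take a).flatten.length ≤ (l.take b).flatten.length := by
    intro a b hab
    have h1 : l.take a = (l.take b).take a := by rw [List.take_take, min_eq_left hab]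
    calc (l.take a).flatten.length = ((l.take b).take a).flatten.length := by rw [← h1]
      _ ≤ (((l.take b).take a).flatten ++ ((l.take b).drop a).flatten).length := by
          rw [List.length_append]; omega
      _ = (l.take b).flatten.length := by rw [← List.flatten_append, List.take_append_drop]
  have htot : (l.take t).flatten.length = l.flatten.length := by
    rw [← hlenl, List.take_length]
  have hgetD : ∀ (i : Fin t) (k : ℕ), k < (ws i).length →
      l.flatten.getD ((l.take i.val).flatten.length + k) default
        = (ws i).getD k default := by
    intro i k hk
    rw [hdecomp i, List.getD_append_right _ _ _ _ (by omega), Nat.add_sub_cancel_left,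
      List.getD_append _ _ _ _ hk]
  have hbu : ∀ (i k : Fin t) (x : ℕ),
      (l.take i.val).flatten.length ≤ x → x < (l.take (i.val + 1)).flatten.length →
      (l.take k.val).flatten.length ≤ x → x < (l.take (k.val + 1)).flatten.length →
      i = k := by
    intro i k x hi1 hi2 hk1 hk2
    rcases lt_trichotomy i k with h | h | h
    · exfalso
      have := hmono' (i.val + 1) k.val h
      omega
    · exact h
    · exfalso
      have := hmono' (k.val + 1) i.val h
      omega
  -- compatibility of SW with the concatenation
  have hcSW : compat wcPair l.flatten SW := by
    refine ⟨hlen, ?_⟩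
    intro q hq
    rw [hpairs] at hq
    rcases Finset.mem_biUnion.mp hq with ⟨i, -, hq⟩
    rcases Finset.mem_image.mp hq with ⟨r, hr, rfl⟩
    have h1 := (Ss i).lt r hr
    have h2 := (Ss i).ub r hr
    rw [hSSlen i] at h2
    simp only
    rw [hoffl i, Nat.add_comm r.1, Nat.add_comm r.2, hgetD i r.1 (by omega), hgetD i r.2 h2]
    exact ((hdes i).1).2 r hr
  -- SW is saturated
  have hsatSW : SW.saturated := by
    intro x hx
    rw [hlen] at hx
    obtain ⟨k, hk, h1, h2⟩ := pos_block l x hx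
    have hkt : k < t := by rwa [hlenl] at hk
    set i : Fin t := ⟨k, hkt⟩ with hidef
    have hio : i.val = k := rfl
    have hxlt : x - (l.take k).flatten.length < (ws i).length := by
      have := hstep i; rw [hio] at this; omega
    obtain ⟨r, hr, hrx⟩ := hsat i (x - (l.take k).flatten.length) (by rwa [hSSlen i])
    have hrlt := (Ss i).lt r hr
    refine ⟨(r.1 + off i, r.2 + off i), ?_, ?_⟩
    · rw [hpairs]
      exact Finset.mem_biUnion.mpr ⟨i, Finset.mem_univ i,
        Finset.mem_image.mpr ⟨r, hr, rfl⟩⟩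
    · rw [hoffl i, hio]
      simp only
      omega
  have hcardSW : 2 * SW.pairs.card = l.flatten.length := by
    rw [SecStr.two_mul_card_of_saturated hsatSW, hlen]
  -- uniqueness of the saturated structure
  have huniq : ∀ S' : SecStr, compat wcPair l.flatten S' → S'.saturated → S' = SW := by
    intro S' hc' hS'
    have hat' : ∀ u ∈ l, atomicSaturable wcPair u := by
      intro u hu
      rcases List.mem_ofFn.mp (by rwa [hldef] at hu) with ⟨i, rfl⟩
      exact hatom i
    have hne' : ∀ u ∈ l, u ≠ [] := by
      intro u hu
      rcases List.mem_ofFn.mp (by rwa [hldef] at hu) with ⟨i, rfl⟩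
      exact hne i
    have hpw' : l.Pairwise (fun a b => a.headI ≠ b.headI) := by
      rw [hldef, List.pairwise_ofFn]
      intro i j hij
      exact hdist i j (Fin.ne_of_lt hij)
    have hblocks := pairs_in_block l hat' hne' hpw' S' hc' hS'
    have hblk : ∀ q ∈ S'.pairs, ∃ i : Fin t,
        (l.take i.val).flatten.length ≤ q.1 ∧
          q.2 < (l.take (i.val + 1)).flatten.length := by
      intro q hq
      obtain ⟨l₁, v, l₂, hs, h1, h2⟩ := hblocks q hq
      have hkt : l₁.length < t := by
        have h3 : l.length = l₁.length + (v :: l₂).length := by rw [hs, List.length_append]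
        rw [hlenl] at h3
        simp only [List.length_cons] at h3
        omega
      refine ⟨⟨l₁.length, hkt⟩, ?_, ?_⟩
      · have h4 : l.take l₁.length = l₁ := by rw [hs, List.take_left]
        rw [h4]; exact h1
      · have h4 : l.take (l₁.length + 1) = l₁ ++ [v] := by
          rw [hs, List.take_length_add_append 1]
          rfl
        rw [h4, List.flatten_append, List.length_append]
        simpa using h2
    -- the structure induced on block i equals Ss i
    have hperblock : ∀ i : Fin t, ∀ a b : ℕ, (a, b) ∈ (Ss i).pairs ↔
        ∃ q ∈ S'.pairs, ((l.take i.val).flatten.length ≤ q.1 ∧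
          q.2 < (l.take (i.val + 1)).flatten.length) ∧
          a = q.1 - (l.take i.val).flatten.length ∧
          b = q.2 - (l.take i.val).flatten.length := by
      intro i
      have hstepi := hstep i
      have hsub : (l.take (i.val + 1)).flatten.length ≤ l.flatten.length := by
        rw [← htot]; exact hmono' _ _ (by omega)
      set n₀ := (l.take i.val).flatten.length with hn₀
      set T := reindexStr
        (restrictStr S' (fun q => n₀ ≤ q.1 ∧ q.2 < (l.take (i.val + 1)).flatten.length)
          S'.len (fun q hq _ => S'.ub q hq))
        (fun x => x - n₀) (ws i).length (fun x => n₀ ≤ x)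
        (by
          intro q hq
          rw [mem_restrictStr_pairs] at hq
          have := S'.lt q hq.1
          exact ⟨hq.2.1, by omega⟩)
        (by intro x y hx hy hxy; omega)
        (by
          intro q hq
          rw [mem_restrictStr_pairs] at hq
          have := S'.lt q hq.1
          omega) with hT
      have hTmem : ∀ a b : ℕ, ((a, b) ∈ T.pairs ↔
          ∃ q ∈ S'.pairs, (n₀ ≤ q.1 ∧ q.2 < (l.take (i.val + 1)).flatten.length) ∧
            a = q.1 - n₀ ∧ b = q.2 - n₀) := by
        intro a b
        rw [hT, reindexStr_pairs]
        constructor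
        · intro h
          rcases Finset.mem_image.mp h with ⟨q, hq, heq⟩
          rw [mem_restrictStr_pairs] at hq
          rw [Prod.mk.injEq] at heq
          exact ⟨q, hq.1, hq.2, heq.1.symm, heq.2.symm⟩
        · rintro ⟨q, hq, hcond, rfl, rfl⟩
          exact Finset.mem_image.mpr ⟨q, mem_restrictStr_pairs.mpr ⟨hq, hcond⟩, rfl⟩
      suffices hTS : T = Ss i by
        intro a b
        rw [← hTS, hTmem a b]
      -- T is compatible with ws i
      have hcT : compat wcPair (ws i) T := by
        constructor
        · rw [hT, reindexStr_len]
        · intro q hq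
          rw [hT, reindexStr_pairs] at hq
          rcases Finset.mem_image.mp hq with ⟨r, hr, rfl⟩
          rw [mem_restrictStr_pairs] at hr
          have hrl := S'.lt r hr.1
          have hg : ∀ x, n₀ ≤ x → x < (l.take (i.val + 1)).flatten.length →
              (ws i).getD (x - n₀) default = l.flatten.getD x default := by
            intro x hx1 hx2
            have h5 : x - n₀ < (ws i).length := by omega
            rw [← hgetD i (x - n₀) h5]
            congr 1
            omega
          rw [hg r.1 hr.2.1 (by omega), hg r.2 (by omega) hr.2.2]
          exact hc'.2 r hr.1
      -- T is saturated
      have hsT : T.saturated := by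
        intro k hk
        rw [hT, reindexStr_len] at hk
        have hxl : n₀ + k < S'.len := by rw [hc'.1]; omega
        obtain ⟨q, hq, hqx⟩ := hS' (n₀ + k) hxl
        obtain ⟨i', hi1, hi2⟩ := hblk q hq
        have hql := S'.lt q hq
        have hii : i' = i := by
          apply hbu i' i (n₀ + k) (by omega) (by omega) (by omega) (by omega)
        rw [hii] at hi1 hi2
        refine ⟨(q.1 - n₀, q.2 - n₀), ?_, ?_⟩
        · rw [hT, reindexStr_pairs]
          exact Finset.mem_image.mpr ⟨q, mem_restrictStr_pairs.mpr ⟨hq, hi1, hi2⟩, rfl⟩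
        · simp only
          omega
      -- uniqueness via the design property
      by_contra hne''
      have hges := (hdes i).2 T hcT hne''
      rw [energy_const, energy_const] at hges
      have hcard1 : 2 * T.pairs.card = (ws i).length := by
        have := SecStr.two_mul_card_of_saturated hsT
        rwa [hT, reindexStr_len] at this
      have hcard2 : 2 * (Ss i).pairs.card = (ws i).length := by
        have := SecStr.two_mul_card_of_saturated (hsat i)
        rwa [hSSlen i] at this
      have hcc : T.pairs.card = (Ss i).pairs.card := by omega
      rw [hcc] at hges
      linarith
    -- conclude equality of the pair sets
    have hpairs_eq : S'.pairs = SW.pairs := by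
      ext q
      constructor
      · intro hq
        obtain ⟨i, h1, h2⟩ := hblk q hq
        have hql := S'.lt q hq
        rw [hpairs]
        apply Finset.mem_biUnion.mpr ⟨i, Finset.mem_univ i, ?_⟩
        apply Finset.mem_image.mpr
        refine ⟨(q.1 - (l.take i.val).flatten.length, q.2 - (l.take i.val).flatten.length),
          ?_, ?_⟩
        · rw [hperblock i]
          exact ⟨q, hq, ⟨h1, h2⟩, rfl, rfl⟩
        · rw [hoffl i]
          simp only
          rw [Prod.ext_iff]
          constructor
          · simp only; omega
          · simp only; omega
      · intro hq
        rw [hpairs] at hq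
        rcases Finset.mem_biUnion.mp hq with ⟨i, -, hq⟩
        rcases Finset.mem_image.mp hq with ⟨r, hr, rfl⟩
        rcases r with ⟨a, b⟩
        rw [hperblock i] at hr
        obtain ⟨q', hq', ⟨hc1, hc2⟩, ha, hb⟩ := hr
        have hql := S'.lt q' hq'
        have heq : ((a, b).1 + off i, (a, b).2 + off i) = q' := by
          rw [hoffl i, Prod.ext_iff]
          constructor
          · simp only; omega
          · simp only; omega
        rw [heq]
        exact hq'
    exact SecStr.ext' (by rw [hc'.1, hlen]) hpairs_eq
  -- final assembly
  refine ⟨hcSW, ?_⟩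
  intro S' hc' hneSW
  rw [energy_const, energy_const]
  have hle : 2 * S'.pairs.card ≤ l.flatten.length := by
    rw [← hc'.1]; exact S'.two_mul_card_le
  have hlt : S'.pairs.card < SW.pairs.card := by
    rcases Nat.lt_or_ge S'.pairs.card SW.pairs.card with h | h
    · exact h
    · exfalso
      have hsat' : S'.saturated := S'.saturated_of_card (by rw [hc'.1]; omega)
      exact hneSW (huniq S' hc' hsat')
  have hcast : (S'.pairs.card : ℝ) + 1 ≤ (SW.pairs.card : ℝ) := by exact_mod_cast hlt
  linarith
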